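/- Let A₂, A₃ ∈ ℝ with A₂ ≠ 0, and consider the trace-type octupolar potential Φₜ(x₁,x₂,x₃) = A₂x₁²x₂ + A₃x₂²x₃ on ℝ³. If 0 < |A₃| < √2·|A₂|, then Φₜ has exactly ten critical points on the unit sphere S² (five in each open hemisphere x₃ > 0 and x₃ < 0). If |A₃| > √2·|A₂|, then Φₜ has exactly six critical points on S² (three in each open hemisphere). -/

import Mathlib

/-- The trace-type octupolar potential `Φₜ(x) = A₂x₁²x₂ + A₃x₂²x₃`. -/
noncomputable def tracePot (A₂ A₃ : ℝ) (x : EuclideanSpace ℝ (Fin 3)) : ℝ :=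
  A₂ * (x 0) ^ 2 * x 1 + A₃ * (x 1) ^ 2 * x 2

/-- The set of critical points of the trace-type potential on the unit sphere. -/
noncomputable def traceCrit (A₂ A₃ : ℝ) : Set (EuclideanSpace ℝ (Fin 3)) :=
  {x | (x 0) ^ 2 + (x 1) ^ 2 + (x 2) ^ 2 = 1 ∧
    ∃ c : ℝ, gradient (tracePot A₂ A₃) x = c • x}

noncomputable def ep (a b c : ℝ) : EuclideanSpace ℝ (Fin 3) :=
  (WithLp.equiv 2 (Fin 3 → ℝ)).symm ![a, b, c]

lemma ep0 (a b c : ℝ) : ep a b c 0 = a := rfl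
lemma ep1 (a b c : ℝ) : ep a b c 1 = b := rfl
lemma ep2 (a b c : ℝ) : ep a b c 2 = c := rfl

lemma ep_eta (x : EuclideanSpace ℝ (Fin 3)) : ep (x 0) (x 1) (x 2) = x := by
  have : ∀ i : Fin 3, ep (x 0) (x 1) (x 2) i = x i := by
    intro i; fin_cases i <;> rfl
  exact PiLp.ext this

lemma ep_inj {a b c a' b' c' : ℝ} : ep a b c = ep a' b' c' ↔ a = a' ∧ b = b' ∧ c = c' := by
  constructor
  · intro h
    exact ⟨congrArg (fun v => v 0) h, congrArg (fun v => v 1) h, congrArg (fun v => v 2) h⟩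
  · rintro ⟨rfl, rfl, rfl⟩; rfl

noncomputable def tgrad (A₂ A₃ : ℝ) (x : EuclideanSpace ℝ (Fin 3)) : EuclideanSpace ℝ (Fin 3) :=
  ep (2 * A₂ * x 0 * x 1) (A₂ * (x 0)^2 + 2 * A₃ * x 1 * x 2) (A₃ * (x 1)^2)

lemma hasGradient_tracePot (A₂ A₃ : ℝ) (x : EuclideanSpace ℝ (Fin 3)) :
    HasGradientAt (tracePot A₂ A₃) (tgrad A₂ A₃ x) x := by
  rw [hasGradientAt_iff_hasFDerivAt]
  have h0 : HasFDerivAt (fun y : EuclideanSpace ℝ (Fin 3) => y 0)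
      (EuclideanSpace.proj (0 : Fin 3) : EuclideanSpace ℝ (Fin 3) →L[ℝ] ℝ) x :=
    (EuclideanSpace.proj (0 : Fin 3) : EuclideanSpace ℝ (Fin 3) →L[ℝ] ℝ).hasFDerivAt
  have h1 : HasFDerivAt (fun y : EuclideanSpace ℝ (Fin 3) => y 1)
      (EuclideanSpace.proj (1 : Fin 3) : EuclideanSpace ℝ (Fin 3) →L[ℝ] ℝ) x :=
    (EuclideanSpace.proj (1 : Fin 3) : EuclideanSpace ℝ (Fin 3) →L[ℝ] ℝ).hasFDerivAt
  have h2 : HasFDerivAt (fun y : EuclideanSpace ℝ (Fin 3) => y 2)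
      (EuclideanSpace.proj (2 : Fin 3) : EuclideanSpace ℝ (Fin 3) →L[ℝ] ℝ) x :=
    (EuclideanSpace.proj (2 : Fin 3) : EuclideanSpace ℝ (Fin 3) →L[ℝ] ℝ).hasFDerivAt
  have H := (((h0.mul h0).const_mul A₂).mul h1).add (((h1.mul h1).const_mul A₃).mul h2)
  have hD := H.congr_of_eventuallyEq (Filter.Eventually.of_forall
    (fun y => by show tracePot A₂ A₃ y = _; simp only [tracePot, Pi.add_apply, Pi.mul_apply]; ring))
  refine hD.congr_fderiv ?_
  ext v
  simp [tgrad, ep, InnerProductSpace.toDual, EuclideanSpace.proj, PiLp.inner_apply,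
    Fin.sum_univ_three]
  ring

lemma mem_traceCrit_iff (A₂ A₃ : ℝ) (x : EuclideanSpace ℝ (Fin 3)) :
    x ∈ traceCrit A₂ A₃ ↔
      (x 0) ^ 2 + (x 1) ^ 2 + (x 2) ^ 2 = 1 ∧
      ∃ c : ℝ, 2 * A₂ * x 0 * x 1 = c * x 0 ∧
        A₂ * (x 0)^2 + 2 * A₃ * x 1 * x 2 = c * x 1 ∧
        A₃ * (x 1)^2 = c * x 2 := by
  have hg : gradient (tracePot A₂ A₃) x = tgrad A₂ A₃ x :=
    (hasGradient_tracePot A₂ A₃ x).gradient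
  unfold traceCrit
  simp only [Set.mem_setOf_eq, hg]
  refine and_congr_right fun _ => exists_congr fun c => ?_
  constructor
  · intro h
    exact ⟨congrArg (fun v => v 0) h, congrArg (fun v => v 1) h, congrArg (fun v => v 2) h⟩
  · rintro ⟨e0, e1, e2⟩
    refine PiLp.ext fun i => ?_
    fin_cases i
    · exact e0
    · exact e1
    · exact e2

lemma sq_cases {a b : ℝ} (h : a^2 = b^2) : a = b ∨ a = -b := by
  have h' : (a - b) * (a + b) = 0 := by linear_combination h
  rcases mul_eq_zero.mp h' with h'' | h''
  · left; linarith
  · right; linarith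

lemma sq_eq_of_pos {a b : ℝ} (h : a^2 = b^2) (ha : 0 < a) (hb : 0 < b) : a = b := by
  rcases sq_cases h with h' | h'
  · exact h'
  · linarith

/-- the hemisphere-swapping symmetry -/
noncomputable def nm (x : EuclideanSpace ℝ (Fin 3)) : EuclideanSpace ℝ (Fin 3) :=
  ep (x 0) (-(x 1)) (-(x 2))

lemma nm_nm (x : EuclideanSpace ℝ (Fin 3)) : nm (nm x) = x := by
  unfold nm
  simp only [ep0, ep1, ep2, neg_neg]
  exact ep_eta x

lemma nm_inj : Function.Injective nm := fun a b h => by rw [← nm_nm a, h, nm_nm]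

lemma nm_mem {A₂ A₃ : ℝ} {x : EuclideanSpace ℝ (Fin 3)} (h : x ∈ traceCrit A₂ A₃) :
    nm x ∈ traceCrit A₂ A₃ := by
  rw [mem_traceCrit_iff] at h ⊢
  obtain ⟨hs, c, e0, e1, e2⟩ := h
  simp only [nm, ep0, ep1, ep2]
  exact ⟨by linear_combination hs, -c, by linear_combination -e0,
    by linear_combination e1, by linear_combination e2⟩

lemma neg_set_eq (A₂ A₃ : ℝ) :
    {x ∈ traceCrit A₂ A₃ | x 2 < 0} = nm '' {x ∈ traceCrit A₂ A₃ | 0 < x 2} := by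
  ext x
  simp only [Set.mem_image, Set.mem_sep_iff]
  constructor
  · rintro ⟨hm, hz⟩
    refine ⟨nm x, ⟨nm_mem hm, ?_⟩, nm_nm x⟩
    show 0 < nm x 2
    simp only [nm, ep2]
    linarith
  · rintro ⟨y, ⟨hm, hz⟩, rfl⟩
    refine ⟨nm_mem hm, ?_⟩
    show nm y 2 < 0
    simp only [nm, ep2]
    linarith

lemma neg_encard (A₂ A₃ : ℝ) :
    {x ∈ traceCrit A₂ A₃ | x 2 < 0}.encard = {x ∈ traceCrit A₂ A₃ | 0 < x 2}.encard := by
  rw [neg_set_eq]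
  exact nm_inj.encard_image _

lemma crit_z_ne {A₂ A₃ : ℝ} (hA₂ : A₂ ≠ 0) (h3 : A₃ ≠ 0) {x : EuclideanSpace ℝ (Fin 3)}
    (h : x ∈ traceCrit A₂ A₃) : x 2 ≠ 0 := by
  rw [mem_traceCrit_iff] at h
  obtain ⟨hs, c, e0, e1, e2⟩ := h
  intro hz
  rw [hz] at e2
  have hb : x 1 = 0 := by
    have h' : A₃ * (x 1)^2 = 0 := by linear_combination e2
    rcases mul_eq_zero.mp h' with h'' | h''
    · exact absurd h'' h3
    · exact pow_eq_zero_iff two_ne_zero |>.mp h''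
  have ha : x 0 = 0 := by
    rw [hb] at e1
    have h' : A₂ * (x 0)^2 = 0 := by linear_combination e1
    rcases mul_eq_zero.mp h' with h'' | h''
    · exact absurd h'' hA₂
    · exact pow_eq_zero_iff two_ne_zero |>.mp h''
  rw [ha, hb, hz] at hs
  norm_num at hs

lemma crit_split {A₂ A₃ : ℝ} (hA₂ : A₂ ≠ 0) (h3 : A₃ ≠ 0) :
    traceCrit A₂ A₃ = {x ∈ traceCrit A₂ A₃ | 0 < x 2} ∪ {x ∈ traceCrit A₂ A₃ | x 2 < 0} := by
  ext x
  simp only [Set.mem_union, Set.mem_sep_iff]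
  constructor
  · intro h
    rcases lt_trichotomy (x 2) 0 with h' | h' | h'
    · exact Or.inr ⟨h, h'⟩
    · exact absurd h' (crit_z_ne hA₂ h3 h)
    · exact Or.inl ⟨h, h'⟩
  · rintro (⟨h, _⟩ | ⟨h, _⟩) <;> exact h

lemma crit_encard_eq {A₂ A₃ : ℝ} (hA₂ : A₂ ≠ 0) (h3 : A₃ ≠ 0) {n : ℕ∞}
    (h : {x ∈ traceCrit A₂ A₃ | 0 < x 2}.encard = n) :
    (traceCrit A₂ A₃).encard = n + n := by
  rw [crit_split hA₂ h3, Set.encard_union_eq, h, neg_encard, h]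
  rw [Set.disjoint_left]
  rintro x ⟨_, h1⟩ ⟨_, h2⟩
  linarith


lemma crit_point_mem (A₂ A₃ a b c co : ℝ) (hs : a^2 + b^2 + c^2 = 1)
    (h0 : 2*A₂*a*b = co*a) (h1 : A₂*a^2 + 2*A₃*b*c = co*b) (h2 : A₃*b^2 = co*c) :
    ep a b c ∈ traceCrit A₂ A₃ := by
  rw [mem_traceCrit_iff]
  exact ⟨hs, co, h0, h1, h2⟩

lemma posSet1 (A₂ A₃ : ℝ) (hA₂ : A₂ ≠ 0) (h3 : A₃ ≠ 0) (hlt : A₃^2 < 2*A₂^2) :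
    {x ∈ traceCrit A₂ A₃ | 0 < x 2}.encard = 5 := by
  have hA₂sq : (0:ℝ) < A₂^2 := by positivity
  have hA₃sq : (0:ℝ) < A₃^2 := by positivity
  set D := 12*A₂^2 - 3*A₃^2 with hDdef
  have hD : (0:ℝ) < D := by rw [hDdef]; nlinarith
  set b0 := Real.sqrt (2/3) with hb0def
  have hb0 : 0 < b0 := Real.sqrt_pos.mpr (by norm_num)
  have hb0sq : b0^2 = 2/3 := Real.sq_sqrt (by norm_num)
  set z0 := Real.sqrt (1/3) with hz0def
  have hz0 : 0 < z0 := Real.sqrt_pos.mpr (by norm_num)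
  have hz0sq : z0^2 = 1/3 := Real.sq_sqrt (by norm_num)
  set z1 := Real.sqrt (A₃^2 / D) with hz1def
  have hz1 : 0 < z1 := Real.sqrt_pos.mpr (div_pos hA₃sq hD)
  have hz1sq : z1^2 * D = A₃^2 := by
    have h : z1^2 = A₃^2 / D := Real.sq_sqrt (le_of_lt (div_pos hA₃sq hD))
    rw [h]; field_simp
  set x1 := Real.sqrt ((8*A₂^2 - 4*A₃^2) / D) with hx1def
  have h84 : (0:ℝ) < 8*A₂^2 - 4*A₃^2 := by nlinarith
  have hx1 : 0 < x1 := Real.sqrt_pos.mpr (div_pos h84 hD)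
  have hx1sq : x1^2 * D = 8*A₂^2 - 4*A₃^2 := by
    have h : x1^2 = (8*A₂^2 - 4*A₃^2) / D := Real.sq_sqrt (le_of_lt (div_pos h84 hD))
    rw [h]; field_simp
  set y1 := 2*A₂*z1/A₃ with hy1def
  have hy1 : A₃ * y1 = 2*A₂*z1 := by rw [hy1def]; field_simp
  clear_value y1 x1 z1 z0 b0 D
  have hset : {x ∈ traceCrit A₂ A₃ | 0 < x 2} =
      {ep 0 0 1, ep 0 b0 z0, ep 0 (-b0) z0, ep x1 y1 z1, ep (-x1) y1 z1} := by
    refine Set.Subset.antisymm ?_ ?_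
    · rintro x ⟨hm, hz⟩
      rw [mem_traceCrit_iff] at hm
      obtain ⟨hs, c, e0, e1, e2⟩ := hm
      simp only [Set.mem_insert_iff, Set.mem_singleton_iff]
      by_cases ha : x 0 = 0
      · by_cases hb : x 1 = 0
        · left
          have hz2 : (x 2)^2 = 1^2 := by rw [ha, hb] at hs; rw [one_pow]; linarith
          rcases sq_cases hz2 with h' | h'
          · rw [← ep_eta x, ha, hb, h']
          · linarith
        · have hc : c = 2*A₃*(x 2) := by
            rw [ha] at e1
            have h' : (2*A₃*(x 2) - c) * (x 1) = 0 := by linear_combination e1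
            rcases mul_eq_zero.mp h' with h'' | h''
            · linarith
            · exact absurd h'' hb
          have hb2 : (x 1)^2 = 2*(x 2)^2 := by
            rw [hc] at e2
            have h' : A₃ * ((x 1)^2 - 2*(x 2)^2) = 0 := by linear_combination e2
            rcases mul_eq_zero.mp h' with h'' | h''
            · exact absurd h'' h3
            · linarith
          have hzsq : (x 2)^2 = z0^2 := by
            rw [hz0sq]
            rw [ha] at hs
            linarith
          have hzz : x 2 = z0 := sq_eq_of_pos hzsq hz hz0
          have hbsq : (x 1)^2 = b0^2 := by
            rw [hb0sq]
            rw [hz0sq] at hzsq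
            linarith
          rcases sq_cases hbsq with h' | h'
          · right; left; rw [← ep_eta x, ha, h', hzz]
          · right; right; left; rw [← ep_eta x, ha, h', hzz]
      · have hc : c = 2*A₂*(x 1) := by
          have h' : (2*A₂*(x 1) - c) * (x 0) = 0 := by linear_combination e0
          rcases mul_eq_zero.mp h' with h'' | h''
          · linarith
          · exact absurd h'' ha
        have hb : x 1 ≠ 0 := by
          intro hb
          rw [hb] at e1
          have h' : A₂ * (x 0)^2 = 0 := by linear_combination e1
          rcases mul_eq_zero.mp h' with h'' | h''
          · exact absurd h'' hA₂
          · exact ha (pow_eq_zero_iff two_ne_zero |>.mp h'')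
        have hr3 : A₃ * (x 1) = 2*A₂*(x 2) := by
          rw [hc] at e2
          have h' : (A₃*(x 1) - 2*A₂*(x 2)) * (x 1) = 0 := by linear_combination e2
          rcases mul_eq_zero.mp h' with h'' | h''
          · linarith
          · exact absurd h'' hb
        have key1 : A₃^2*(x 0)^2 = (8*A₂^2 - 4*A₃^2)*(x 2)^2 := by
          rw [hc] at e1
          have h' : A₂ * (A₃^2*(x 0)^2 - (8*A₂^2 - 4*A₃^2)*(x 2)^2) = 0 := by
            linear_combination A₃^2 * e1 + (4*A₂^2*(x 2) + 2*A₂*A₃*(x 1) - 2*A₃^2*(x 2)) * hr3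
          rcases mul_eq_zero.mp h' with h'' | h''
          · exact absurd h'' hA₂
          · linarith
        have hb2 : A₃^2*(x 1)^2 = 4*A₂^2*(x 2)^2 := by
          linear_combination (A₃*(x 1) + 2*A₂*(x 2)) * hr3
        have hzsq : (x 2)^2 = z1^2 := by
          refine mul_right_cancel₀ (ne_of_gt hD) ?_
          rw [hz1sq]
          linear_combination A₃^2*hs - key1 - hb2 + (x 2)^2*hDdef
        have hzz : x 2 = z1 := sq_eq_of_pos hzsq hz hz1
        have hbb : x 1 = y1 := by
          rw [hzz] at hr3
          exact mul_left_cancel₀ h3 (hr3.trans hy1.symm)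
        have hasq : (x 0)^2 = x1^2 := by
          rw [hzz] at key1
          refine mul_left_cancel₀ (ne_of_gt hA₃sq) ?_
          linear_combination key1 + x1^2*hz1sq - z1^2*hx1sq
        rcases sq_cases hasq with h' | h'
        · right; right; right; left; rw [← ep_eta x, h', hbb, hzz]
        · right; right; right; right; rw [← ep_eta x, h', hbb, hzz]
    · intro x hx
      simp only [Set.mem_insert_iff, Set.mem_singleton_iff] at hx
      rcases hx with rfl | rfl | rfl | rfl | rfl
      · exact ⟨crit_point_mem A₂ A₃ 0 0 1 0 (by norm_num) (by ring) (by ring) (by ring),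
          show (0:ℝ) < 1 from one_pos⟩
      · refine ⟨crit_point_mem A₂ A₃ 0 b0 z0 (2*A₃*z0) ?_ (by ring) (by ring) ?_, show (0:ℝ) < z0 from hz0⟩
        · linear_combination hb0sq + hz0sq
        · linear_combination A₃*hb0sq - 2*A₃*hz0sq
      · refine ⟨crit_point_mem A₂ A₃ 0 (-b0) z0 (2*A₃*z0) ?_ (by ring) (by ring) ?_, show (0:ℝ) < z0 from hz0⟩
        · linear_combination hb0sq + hz0sq
        · linear_combination A₃*hb0sq - 2*A₃*hz0sq
      · refine ⟨crit_point_mem A₂ A₃ x1 y1 z1 (2*A₂*y1) ?_ (by ring) ?_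
          (by linear_combination y1*hy1), show (0:ℝ) < z1 from hz1⟩
        · refine mul_right_cancel₀ (show D*A₃^2 ≠ 0 by positivity) ?_
          linear_combination A₃^2*hx1sq + (4*A₂^2 + A₃^2)*hz1sq +
            (y1*D*A₃ + 2*z1*D*A₂)*hy1 - A₃^2*hDdef
        · refine mul_right_cancel₀ (show D*A₃^2 ≠ 0 by positivity) ?_
          linear_combination A₂*A₃^2*hx1sq + (-8*A₂^3 + 4*A₂*A₃^2)*hz1sq +
            (-2*y1*D*A₂*A₃ - 4*z1*D*A₂^2 + 2*z1*D*A₃^2)*hy1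
      · refine ⟨crit_point_mem A₂ A₃ (-x1) y1 z1 (2*A₂*y1) ?_ (by ring) ?_
          (by linear_combination y1*hy1), show (0:ℝ) < z1 from hz1⟩
        · refine mul_right_cancel₀ (show D*A₃^2 ≠ 0 by positivity) ?_
          linear_combination A₃^2*hx1sq + (4*A₂^2 + A₃^2)*hz1sq +
            (y1*D*A₃ + 2*z1*D*A₂)*hy1 - A₃^2*hDdef
        · refine mul_right_cancel₀ (show D*A₃^2 ≠ 0 by positivity) ?_
          linear_combination A₂*A₃^2*hx1sq + (-8*A₂^3 + 4*A₂*A₃^2)*hz1sq +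
            (-2*y1*D*A₂*A₃ - 4*z1*D*A₂^2 + 2*z1*D*A₃^2)*hy1
  rw [hset]
  have n1 : ep 0 0 1 ∉ ({ep 0 b0 z0, ep 0 (-b0) z0, ep x1 y1 z1, ep (-x1) y1 z1} :
      Set (EuclideanSpace ℝ (Fin 3))) := by
    intro h
    simp only [Set.mem_insert_iff, Set.mem_singleton_iff] at h
    rcases h with h | h | h | h
    · have := (ep_inj.mp h).2.1; linarith
    · have := (ep_inj.mp h).2.1; linarith
    · have := (ep_inj.mp h).1; linarith
    · have := (ep_inj.mp h).1; linarith
  have n2 : ep 0 b0 z0 ∉ ({ep 0 (-b0) z0, ep x1 y1 z1, ep (-x1) y1 z1} :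
      Set (EuclideanSpace ℝ (Fin 3))) := by
    intro h
    simp only [Set.mem_insert_iff, Set.mem_singleton_iff] at h
    rcases h with h | h | h
    · have := (ep_inj.mp h).2.1; linarith
    · have := (ep_inj.mp h).1; linarith
    · have := (ep_inj.mp h).1; linarith
  have n3 : ep 0 (-b0) z0 ∉ ({ep x1 y1 z1, ep (-x1) y1 z1} :
      Set (EuclideanSpace ℝ (Fin 3))) := by
    intro h
    simp only [Set.mem_insert_iff, Set.mem_singleton_iff] at h
    rcases h with h | h
    · have := (ep_inj.mp h).1; linarith
    · have := (ep_inj.mp h).1; linarith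
  have n4 : ep x1 y1 z1 ≠ ep (-x1) y1 z1 := by
    intro h
    have := (ep_inj.mp h).1; linarith
  rw [Set.encard_insert_of_notMem n1, Set.encard_insert_of_notMem n2,
    Set.encard_insert_of_notMem n3, Set.encard_pair n4]
  rfl

lemma posSet2 (A₂ A₃ : ℝ) (hA₂ : A₂ ≠ 0) (h3 : A₃ ≠ 0) (hgt : 2*A₂^2 < A₃^2) :
    {x ∈ traceCrit A₂ A₃ | 0 < x 2}.encard = 3 := by
  have hA₂sq : (0:ℝ) < A₂^2 := by positivity
  set b0 := Real.sqrt (2/3) with hb0def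
  have hb0 : 0 < b0 := Real.sqrt_pos.mpr (by norm_num)
  have hb0sq : b0^2 = 2/3 := Real.sq_sqrt (by norm_num)
  set z0 := Real.sqrt (1/3) with hz0def
  have hz0 : 0 < z0 := Real.sqrt_pos.mpr (by norm_num)
  have hz0sq : z0^2 = 1/3 := Real.sq_sqrt (by norm_num)
  clear_value z0 b0
  have hset : {x ∈ traceCrit A₂ A₃ | 0 < x 2} =
      {ep 0 0 1, ep 0 b0 z0, ep 0 (-b0) z0} := by
    refine Set.Subset.antisymm ?_ ?_
    · rintro x ⟨hm, hz⟩
      rw [mem_traceCrit_iff] at hm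
      obtain ⟨hs, c, e0, e1, e2⟩ := hm
      simp only [Set.mem_insert_iff, Set.mem_singleton_iff]
      by_cases ha : x 0 = 0
      · by_cases hb : x 1 = 0
        · left
          have hz2 : (x 2)^2 = 1^2 := by rw [ha, hb] at hs; rw [one_pow]; linarith
          rcases sq_cases hz2 with h' | h'
          · rw [← ep_eta x, ha, hb, h']
          · linarith
        · have hc : c = 2*A₃*(x 2) := by
            rw [ha] at e1
            have h' : (2*A₃*(x 2) - c) * (x 1) = 0 := by linear_combination e1
            rcases mul_eq_zero.mp h' with h'' | h''
            · linarith
            · exact absurd h'' hb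
          have hb2 : (x 1)^2 = 2*(x 2)^2 := by
            rw [hc] at e2
            have h' : A₃ * ((x 1)^2 - 2*(x 2)^2) = 0 := by linear_combination e2
            rcases mul_eq_zero.mp h' with h'' | h''
            · exact absurd h'' h3
            · linarith
          have hzsq : (x 2)^2 = z0^2 := by
            rw [hz0sq]
            rw [ha] at hs
            linarith
          have hzz : x 2 = z0 := sq_eq_of_pos hzsq hz hz0
          have hbsq : (x 1)^2 = b0^2 := by
            rw [hb0sq]
            rw [hz0sq] at hzsq
            linarith
          rcases sq_cases hbsq with h' | h'
          · right; left; rw [← ep_eta x, ha, h', hzz]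
          · right; right; rw [← ep_eta x, ha, h', hzz]
      · exfalso
        have hc : c = 2*A₂*(x 1) := by
          have h' : (2*A₂*(x 1) - c) * (x 0) = 0 := by linear_combination e0
          rcases mul_eq_zero.mp h' with h'' | h''
          · linarith
          · exact absurd h'' ha
        have hb : x 1 ≠ 0 := by
          intro hb
          rw [hb] at e1
          have h' : A₂ * (x 0)^2 = 0 := by linear_combination e1
          rcases mul_eq_zero.mp h' with h'' | h''
          · exact absurd h'' hA₂
          · exact ha (pow_eq_zero_iff two_ne_zero |>.mp h'')
        have hr3 : A₃ * (x 1) = 2*A₂*(x 2) := by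
          rw [hc] at e2
          have h' : (A₃*(x 1) - 2*A₂*(x 2)) * (x 1) = 0 := by linear_combination e2
          rcases mul_eq_zero.mp h' with h'' | h''
          · linarith
          · exact absurd h'' hb
        have key1 : A₃^2*(x 0)^2 = (8*A₂^2 - 4*A₃^2)*(x 2)^2 := by
          rw [hc] at e1
          have h' : A₂ * (A₃^2*(x 0)^2 - (8*A₂^2 - 4*A₃^2)*(x 2)^2) = 0 := by
            linear_combination A₃^2 * e1 + (4*A₂^2*(x 2) + 2*A₂*A₃*(x 1) - 2*A₃^2*(x 2)) * hr3
          rcases mul_eq_zero.mp h' with h'' | h''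
          · exact absurd h'' hA₂
          · linarith
        have h0a : 0 < (x 0)^2 := by positivity
        have h0z : 0 < (x 2)^2 := by positivity
        have hA₃sq : (0:ℝ) < A₃^2 := by positivity
        nlinarith
    · intro x hx
      simp only [Set.mem_insert_iff, Set.mem_singleton_iff] at hx
      rcases hx with rfl | rfl | rfl
      · exact ⟨crit_point_mem A₂ A₃ 0 0 1 0 (by norm_num) (by ring) (by ring) (by ring),
          show (0:ℝ) < 1 from one_pos⟩
      · refine ⟨crit_point_mem A₂ A₃ 0 b0 z0 (2*A₃*z0) ?_ (by ring) (by ring) ?_,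
          show (0:ℝ) < z0 from hz0⟩
        · linear_combination hb0sq + hz0sq
        · linear_combination A₃*hb0sq - 2*A₃*hz0sq
      · refine ⟨crit_point_mem A₂ A₃ 0 (-b0) z0 (2*A₃*z0) ?_ (by ring) (by ring) ?_,
          show (0:ℝ) < z0 from hz0⟩
        · linear_combination hb0sq + hz0sq
        · linear_combination A₃*hb0sq - 2*A₃*hz0sq
  rw [hset]
  have n1 : ep 0 0 1 ∉ ({ep 0 b0 z0, ep 0 (-b0) z0} : Set (EuclideanSpace ℝ (Fin 3))) := by
    intro h
    simp only [Set.mem_insert_iff, Set.mem_singleton_iff] at h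
    rcases h with h | h
    · have := (ep_inj.mp h).2.1; linarith
    · have := (ep_inj.mp h).2.1; linarith
  have n2 : ep 0 b0 z0 ≠ ep 0 (-b0) z0 := by
    intro h
    have := (ep_inj.mp h).2.1; linarith
  rw [Set.encard_insert_of_notMem n1, Set.encard_pair n2]
  rfl

theorem stmt15 (A₂ A₃ : ℝ) (hA₂ : A₂ ≠ 0) :
    (0 < |A₃| ∧ |A₃| < Real.sqrt 2 * |A₂| →
      (traceCrit A₂ A₃).encard = 10 ∧
      {x ∈ traceCrit A₂ A₃ | 0 < x 2}.encard = 5 ∧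
      {x ∈ traceCrit A₂ A₃ | x 2 < 0}.encard = 5) ∧
    (Real.sqrt 2 * |A₂| < |A₃| →
      (traceCrit A₂ A₃).encard = 6 ∧
      {x ∈ traceCrit A₂ A₃ | 0 < x 2}.encard = 3 ∧
      {x ∈ traceCrit A₂ A₃ | x 2 < 0}.encard = 3) := by
  constructor
  · rintro ⟨h0abs, hlt⟩
    have h3 : A₃ ≠ 0 := abs_pos.mp h0abs
    have hlt2 : A₃^2 < 2*A₂^2 := by
      have h := pow_lt_pow_left₀ hlt (abs_nonneg A₃) two_ne_zero
      rw [mul_pow, sq_abs, sq_abs, Real.sq_sqrt (by norm_num : (0:ℝ) ≤ 2)] at h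
      linarith
    have hpos := posSet1 A₂ A₃ hA₂ h3 hlt2
    have hneg := (neg_encard A₂ A₃).trans hpos
    refine ⟨?_, hpos, hneg⟩
    rw [crit_encard_eq hA₂ h3 hpos]
    rfl
  · intro hgt
    have hsA : 0 < Real.sqrt 2 * |A₂| :=
      mul_pos (Real.sqrt_pos.mpr (by norm_num)) (abs_pos.mpr hA₂)
    have h3 : A₃ ≠ 0 := abs_pos.mp (lt_trans hsA hgt)
    have hgt2 : 2*A₂^2 < A₃^2 := by
      have h := pow_lt_pow_left₀ hgt (le_of_lt hsA) two_ne_zero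
      rw [mul_pow, sq_abs, sq_abs, Real.sq_sqrt (by norm_num : (0:ℝ) ≤ 2)] at h
      linarith
    have hpos := posSet2 A₂ A₃ hA₂ h3 hgt2
    have hneg := (neg_encard A₂ A₃).trans hpos
    refine ⟨?_, hpos, hneg⟩
    rw [crit_encard_eq hA₂ h3 hpos]
    rfl
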